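/- With the impulsive Volterra setup and the operator S_d as defined there, let h* := min_{1≤i≤N+1}(τ_i − τ_{i−1}) and for μ > 0 define ‖ξ‖_μ := sup_{0≤t≤T} e^{−μt}|ξ(t)| and ‖η‖_μ := max_{1≤i≤N} e^{−μτ_i}|η_i|. Then for every μ > 0 and all admissible pairs (ξ₁,η₁), (ξ₂,η₂): ‖S_d(ξ₁,η₁) − S_d(ξ₂,η₂)‖_μ ≤ C_f·((1 − e^{−μτ_N})/μ)·‖ξ₁ − ξ₂‖_μ + C_G·e^{−μh*}·((1 − e^{−μ(N−1)h*})/(1 − e^{−μh*}))·‖η₁ − η₂‖_μ. -/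

import Mathlib

open Set Filter MeasureTheory

lemma chainInt {E : Type*} [NormedAddCommGroup E] (F : ℝ → E) (τ : ℕ → ℝ) :
    ∀ K : ℕ, (∀ j, 1 ≤ j → j ≤ K → IntegrableOn F (Set.Ioc (τ (j-1)) (τ j))) →
    IntegrableOn F (Set.Ioc (τ 0) (τ K))
  | 0, _ => by simp
  | (K+1), hj => by
      have h1 := chainInt F τ K (fun j a b => hj j a (by omega))
      have h2 := hj (K+1) (by omega) le_rfl
      have hsub : Set.Ioc (τ 0) (τ (K+1)) ⊆ Set.Ioc (τ 0) (τ K) ∪ Set.Ioc (τ K) (τ (K+1)) :=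
        fun t ht => by
          rcases le_or_gt t (τ K) with h'|h'
          · exact Or.inl ⟨ht.1, h'⟩
          · exact Or.inr ⟨h', ht.2⟩
      exact (h1.union (by simpa using h2)).mono_set hsub

lemma coverLemma (τ : ℕ → ℝ) : ∀ K : ℕ, ∀ t : ℝ, τ 0 ≤ t → t < τ K →
    ∃ j, 1 ≤ j ∧ j ≤ K ∧ τ (j-1) ≤ t ∧ t < τ j
  | 0, t, h1, h2 => absurd (h1.trans_lt h2) (lt_irrefl _)
  | (K+1), t, h1, h2 => by
      rcases le_or_gt (τ K) t with h'|h'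
      · exact ⟨K+1, by omega, le_rfl, by simpa using h', h2⟩
      · obtain ⟨j, hj1, hj2, hj3, hj4⟩ := coverLemma τ K t h1 h'
        exact ⟨j, hj1, hj2.trans (Nat.le_succ K), hj3, hj4⟩

set_option maxHeartbeats 2000000 in
/-- **Lemma 3.2, discrete component.** With `h* = min (τ_i − τ_{i−1})` and the weighted norms
`‖ξ‖_μ = sup_{0≤t≤T} e^{−μt}|ξ(t)|`, `‖η‖_μ = max_{1≤i≤N} e^{−μτ_i}|η_i|`, the discrete
component `S_d` of the fixed-point operator satisfies, for every `μ > 0`,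
`‖S_d(ξ₁,η₁) − S_d(ξ₂,η₂)‖_μ ≤ C_f (1−e^{−μτ_N})/μ ‖ξ₁−ξ₂‖_μ
  + C_G e^{−μh*}(1−e^{−μ(N−1)h*})/(1−e^{−μh*}) ‖η₁−η₂‖_μ`. -/
theorem Sd_weighted_norm_estimate
    (n m N : ℕ) (hN : 1 ≤ N) (T : ℝ) (hT : 0 < T)
    (τ : ℕ → ℝ) (hτ0 : τ 0 = 0) (hτT : τ (N + 1) = T)
    (hτmono : ∀ i j : ℕ, i < j → j ≤ N + 1 → τ i < τ j)
    (U : Set (Fin m → ℝ)) (a : ℕ → (Fin m → ℝ)) (haU : ∀ i, 1 ≤ i → i ≤ N + 1 → a i ∈ U)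
    (u : ℝ → (Fin m → ℝ))
    (hu : ∀ i, 1 ≤ i → i ≤ N + 1 → ∀ t ∈ Ico (τ (i - 1)) (τ i), u t = a i)
    (h : ℝ → EuclideanSpace ℝ (Fin n)) (hh : ContinuousOn h (Icc 0 T))
    (f : ℝ → ℝ → EuclideanSpace ℝ (Fin n) → (Fin m → ℝ) → EuclideanSpace ℝ (Fin n))
    (G : ℝ → ℝ → EuclideanSpace ℝ (Fin n) → (Fin m → ℝ) → (Fin m → ℝ) →
      EuclideanSpace ℝ (Fin n))
    (hf : ContinuousOn
      (fun p : (ℝ × ℝ) × EuclideanSpace ℝ (Fin n) × (Fin m → ℝ) => f p.1.1 p.1.2 p.2.1 p.2.2)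
      (({st : ℝ × ℝ | 0 ≤ st.2 ∧ st.2 ≤ st.1 ∧ st.1 ≤ T}) ×ˢ ((univ : Set _) ×ˢ U)))
    (hG : ContinuousOn
      (fun p : (ℝ × ℝ) × EuclideanSpace ℝ (Fin n) × (Fin m → ℝ) × (Fin m → ℝ) =>
        G p.1.1 p.1.2 p.2.1 p.2.2.1 p.2.2.2)
      (({st : ℝ × ℝ | 0 ≤ st.2 ∧ st.2 ≤ st.1 ∧ st.1 ≤ T}) ×ˢ ((univ : Set _) ×ˢ (U ×ˢ U))))
    (Cf CG : ℝ)
    (hfLip : ∀ s t : ℝ, 0 ≤ t → t ≤ s → s ≤ T → ∀ α ∈ U,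
      ∀ x₁ x₂ : EuclideanSpace ℝ (Fin n), ‖f s t x₁ α - f s t x₂ α‖ ≤ Cf * ‖x₁ - x₂‖)
    (hGLip : ∀ s t : ℝ, 0 ≤ t → t ≤ s → s ≤ T → ∀ α ∈ U, ∀ β ∈ U,
      ∀ x₁ x₂ : EuclideanSpace ℝ (Fin n), ‖G s t x₁ α β - G s t x₂ α β‖ ≤ CG * ‖x₁ - x₂‖)
    (μ : ℝ) (hμ : 0 < μ)
    -- the two admissible pairs `(ξ₁,η₁)`, `(ξ₂,η₂)`:
    (ξ₁ ξ₂ : ℝ → EuclideanSpace ℝ (Fin n)) (η₁ η₂ : ℕ → EuclideanSpace ℝ (Fin n))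
    (hbdd₁ : ∃ M : ℝ, ∀ t ∈ Icc 0 T, ‖ξ₁ t‖ ≤ M)
    (hbdd₂ : ∃ M : ℝ, ∀ t ∈ Icc 0 T, ‖ξ₂ t‖ ≤ M)
    (hcont₁ : ∀ i, 1 ≤ i → i ≤ N + 1 → ContinuousOn ξ₁ (Ioo (τ (i - 1)) (τ i)))
    (hcont₂ : ∀ i, 1 ≤ i → i ≤ N + 1 → ContinuousOn ξ₂ (Ioo (τ (i - 1)) (τ i)))
    (hlim₁ : (∀ i, i ≤ N → ∃ Lp, Tendsto ξ₁ (nhdsWithin (τ i) (Ioi (τ i))) (nhds Lp)) ∧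
      (∀ i, 1 ≤ i → i ≤ N + 1 → ∃ Lm, Tendsto ξ₁ (nhdsWithin (τ i) (Iio (τ i))) (nhds Lm)))
    (hlim₂ : (∀ i, i ≤ N → ∃ Lp, Tendsto ξ₂ (nhdsWithin (τ i) (Ioi (τ i))) (nhds Lp)) ∧
      (∀ i, 1 ≤ i → i ≤ N + 1 → ∃ Lm, Tendsto ξ₂ (nhdsWithin (τ i) (Iio (τ i))) (nhds Lm))) :
    -- the discrete-component estimate with the explicit constants `a₂₁(μ)`, `a₂₂(μ)` of (3.5)
    ((Finset.Icc 1 N).sup' (Finset.nonempty_Icc.mpr hN) (fun i => Real.exp (-μ * τ i) *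
        ‖(h (τ i) + (∫ t in (0:ℝ)..(τ i), f (τ i) t (ξ₁ t) (u t)) +
            ∑ j ∈ Finset.Icc 1 (i - 1),
              G (τ i) (τ j) (η₁ j) (a j) (a (j + 1))) -
          (h (τ i) + (∫ t in (0:ℝ)..(τ i), f (τ i) t (ξ₂ t) (u t)) +
            ∑ j ∈ Finset.Icc 1 (i - 1),
              G (τ i) (τ j) (η₂ j) (a j) (a (j + 1)))‖))
    ≤ Cf * ((1 - Real.exp (-μ * τ N)) / μ) *
        (⨆ t : Icc (0:ℝ) T, Real.exp (-μ * t) * ‖ξ₁ t - ξ₂ t‖) +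
      CG * (Real.exp (-μ * ((Finset.Icc 1 (N + 1)).inf'
            (Finset.nonempty_Icc.mpr (by omega)) (fun i => τ i - τ (i - 1)))) *
          ((1 - Real.exp (-μ * ((N : ℝ) - 1) * ((Finset.Icc 1 (N + 1)).inf'
            (Finset.nonempty_Icc.mpr (by omega)) (fun i => τ i - τ (i - 1))))) /
          (1 - Real.exp (-μ * ((Finset.Icc 1 (N + 1)).inf'
            (Finset.nonempty_Icc.mpr (by omega)) (fun i => τ i - τ (i - 1))))))) *
        ((Finset.Icc 1 N).sup' (Finset.nonempty_Icc.mpr hN)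
          (fun i => Real.exp (-μ * τ i) * ‖η₁ i - η₂ i‖)) := by
  have hNonempty : (Finset.Icc 1 (N + 1)).Nonempty := Finset.nonempty_Icc.mpr (by omega)
  set hs := (Finset.Icc 1 (N + 1)).inf' hNonempty (fun i => τ i - τ (i - 1)) with hs_def
  set X := ⨆ t : Icc (0:ℝ) T, Real.exp (-μ * t) * ‖ξ₁ t - ξ₂ t‖ with X_def
  set Y := (Finset.Icc 1 N).sup' (Finset.nonempty_Icc.mpr hN)
      (fun i => Real.exp (-μ * τ i) * ‖η₁ i - η₂ i‖) with Y_def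
  set r := Real.exp (-μ * hs) with r_def
  -- basic facts about τ
  have hτle : ∀ i j : ℕ, i ≤ j → j ≤ N + 1 → τ i ≤ τ j := by
    intro i j hij hj
    rcases eq_or_lt_of_le hij with rfl | h'
    · exact le_rfl
    · exact (hτmono i j h' hj).le
  have hτpos : ∀ i, i ≤ N + 1 → 0 ≤ τ i := fun i hi => hτ0 ▸ hτle 0 i (Nat.zero_le _) hi
  have hτleT : ∀ i, i ≤ N + 1 → τ i ≤ T := fun i hi => hτT ▸ hτle i (N + 1) hi le_rfl
  have hτNT : τ N < T := hτT ▸ hτmono N (N + 1) (by omega) le_rfl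
  have hs_pos : 0 < hs := by
    rw [hs_def]
    refine (Finset.lt_inf'_iff _).mpr fun i hi => ?_
    rw [Finset.mem_Icc] at hi
    have := hτmono (i - 1) i (by omega) (by omega)
    linarith
  have hr0 : 0 < r := Real.exp_pos _
  have hr1 : r < 1 := by
    rw [r_def]
    apply Real.exp_lt_one_iff.mpr
    nlinarith
  -- gap estimate
  have gap : ∀ j d : ℕ, j + d ≤ N + 1 → (d : ℝ) * hs ≤ τ (j + d) - τ j := by
    intro j d
    induction d with
    | zero => intro _; simp
    | succ d ih =>
      intro hle
      have h1 := ih (by omega)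
      have h2 : hs ≤ τ (j + d + 1) - τ (j + d) := by
        have hmem := Finset.inf'_le (f := fun i => τ i - τ (i - 1))
          (show j + d + 1 ∈ Finset.Icc 1 (N + 1) by rw [Finset.mem_Icc]; omega)
        simp only [Nat.add_sub_cancel] at hmem
        exact hmem
      push_cast
      have : j + (d + 1) = j + d + 1 := rfl
      rw [this]
      nlinarith
  -- covering and values of u
  have hcover : ∀ t : ℝ, 0 ≤ t → t < T → ∃ j, 1 ≤ j ∧ j ≤ N + 1 ∧ τ (j - 1) ≤ t ∧ t < τ j := by
    intro t h1 h2
    exact coverLemma τ (N + 1) t (by rwa [hτ0]) (by rwa [hτT])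
  have huU : ∀ t : ℝ, 0 ≤ t → t < T → u t ∈ U := by
    intro t h1 h2
    obtain ⟨j, hj1, hj2, hj3, hj4⟩ := hcover t h1 h2
    rw [hu j hj1 hj2 t ⟨hj3, hj4⟩]
    exact haU j hj1 hj2
  -- common bound for ξ₁, ξ₂
  obtain ⟨M₁, hM₁⟩ := hbdd₁
  obtain ⟨M₂, hM₂⟩ := hbdd₂
  set M := max M₁ M₂ with M_def
  have hM : ∀ t ∈ Icc (0:ℝ) T, ‖ξ₁ t‖ ≤ M ∧ ‖ξ₂ t‖ ≤ M := fun t ht =>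
    ⟨(hM₁ t ht).trans (le_max_left _ _), (hM₂ t ht).trans (le_max_right _ _)⟩
  -- facts about X
  have hXbdd : BddAbove (Set.range fun t : Icc (0:ℝ) T => Real.exp (-μ * t) * ‖ξ₁ t - ξ₂ t‖) := by
    refine ⟨M + M, ?_⟩
    rintro x ⟨t, rfl⟩
    have h1 : Real.exp (-μ * (t : ℝ)) ≤ 1 := Real.exp_le_one_iff.mpr (by nlinarith [t.2.1])
    have h2 : ‖ξ₁ (t : ℝ) - ξ₂ (t : ℝ)‖ ≤ M + M :=
      (norm_sub_le _ _).trans (add_le_add (hM t t.2).1 (hM t t.2).2)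
    calc Real.exp (-μ * (t : ℝ)) * ‖ξ₁ (t : ℝ) - ξ₂ (t : ℝ)‖
        ≤ 1 * (M + M) := mul_le_mul h1 h2 (norm_nonneg _) zero_le_one
      _ = M + M := one_mul _
  have hX0 : 0 ≤ X := Real.iSup_nonneg fun t => mul_nonneg (Real.exp_nonneg _) (norm_nonneg _)
  have hXle : ∀ t : ℝ, t ∈ Icc (0:ℝ) T → Real.exp (-μ * t) * ‖ξ₁ t - ξ₂ t‖ ≤ X :=
    fun t ht => le_ciSup hXbdd (⟨t, ht⟩ : Icc (0:ℝ) T)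
  -- sign facts
  have hCf' : ∀ x₁ x₂ : EuclideanSpace ℝ (Fin n), 0 ≤ Cf * ‖x₁ - x₂‖ := fun x₁ x₂ =>
    (norm_nonneg _).trans (hfLip 0 0 le_rfl le_rfl hT.le (a 1) (haU 1 le_rfl (by omega)) x₁ x₂)
  have hCG' : ∀ x₁ x₂ : EuclideanSpace ℝ (Fin n), 0 ≤ CG * ‖x₁ - x₂‖ := fun x₁ x₂ =>
    (norm_nonneg _).trans
      (hGLip 0 0 le_rfl le_rfl hT.le (a 1) (haU 1 le_rfl (by omega)) (a 1)
        (haU 1 le_rfl (by omega)) x₁ x₂)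
  have hCfX : 0 ≤ Cf * X := by
    rcases le_or_gt 0 Cf with hc | hc
    · exact mul_nonneg hc hX0
    · have hz : ∀ x₁ x₂ : EuclideanSpace ℝ (Fin n), ‖x₁ - x₂‖ = 0 := fun x₁ x₂ =>
        le_antisymm (by nlinarith [hCf' x₁ x₂]) (norm_nonneg _)
      have hX : X = 0 := by
        rw [X_def]
        have heq : (fun t : Icc (0:ℝ) T => Real.exp (-μ * t) * ‖ξ₁ t - ξ₂ t‖) =
            fun _ => (0 : ℝ) := funext fun t => by rw [hz, mul_zero]
        rw [heq]
        haveI : Nonempty (Icc (0:ℝ) T) := ⟨⟨0, le_rfl, hT.le⟩⟩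
        exact ciSup_const
      rw [hX, mul_zero]
  have hY0 : 0 ≤ Y := le_trans (by positivity)
    (Finset.le_sup' (f := fun i => Real.exp (-μ * τ i) * ‖η₁ i - η₂ i‖)
      (Finset.mem_Icc.mpr ⟨le_rfl, hN⟩))
  have hYle : ∀ j, 1 ≤ j → j ≤ N → Real.exp (-μ * τ j) * ‖η₁ j - η₂ j‖ ≤ Y := fun j h1 h2 =>
    Finset.le_sup' (f := fun i => Real.exp (-μ * τ i) * ‖η₁ i - η₂ i‖)
      (Finset.mem_Icc.mpr ⟨h1, h2⟩)
  have hCGY : 0 ≤ CG * Y := by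
    rcases le_or_gt 0 CG with hc | hc
    · exact mul_nonneg hc hY0
    · have hz : ∀ x₁ x₂ : EuclideanSpace ℝ (Fin n), ‖x₁ - x₂‖ = 0 := fun x₁ x₂ =>
        le_antisymm (by nlinarith [hCG' x₁ x₂]) (norm_nonneg _)
      have hY : Y = 0 := le_antisymm
        (Finset.sup'_le _ _ fun j _ => by rw [hz, mul_zero]) hY0
      rw [hY, mul_zero]
  -- pointwise weighted bounds
  have hCfle : ∀ t ∈ Icc (0:ℝ) T, Cf * ‖ξ₁ t - ξ₂ t‖ ≤ Cf * X * Real.exp (μ * t) := by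
    intro t ht
    rcases le_or_gt 0 Cf with hc | hc
    · have h1 := hXle t ht
      have h2 : Real.exp (-μ * t) * Real.exp (μ * t) = 1 := by
        rw [← Real.exp_add]; ring_nf; exact Real.exp_zero
      have h3 : ‖ξ₁ t - ξ₂ t‖ ≤ X * Real.exp (μ * t) := by
        have h4 := mul_le_mul_of_nonneg_right h1 (Real.exp_pos (μ * t)).le
        calc ‖ξ₁ t - ξ₂ t‖
            = (Real.exp (-μ * t) * Real.exp (μ * t)) * ‖ξ₁ t - ξ₂ t‖ := by rw [h2, one_mul]
          _ = (Real.exp (-μ * t) * ‖ξ₁ t - ξ₂ t‖) * Real.exp (μ * t) := by ring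
          _ ≤ X * Real.exp (μ * t) := h4
      calc Cf * ‖ξ₁ t - ξ₂ t‖ ≤ Cf * (X * Real.exp (μ * t)) := mul_le_mul_of_nonneg_left h3 hc
        _ = Cf * X * Real.exp (μ * t) := (mul_assoc _ _ _).symm
    · have hz : ‖ξ₁ t - ξ₂ t‖ = 0 :=
        le_antisymm (by nlinarith [hCf' (ξ₁ t) (ξ₂ t)]) (norm_nonneg _)
      rw [hz, mul_zero]
      exact mul_nonneg hCfX (Real.exp_nonneg _)
  have hCGle : ∀ j, 1 ≤ j → j ≤ N → CG * ‖η₁ j - η₂ j‖ ≤ CG * Y * Real.exp (μ * τ j) := by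
    intro j h1 h2
    rcases le_or_gt 0 CG with hc | hc
    · have hy := hYle j h1 h2
      have h2' : Real.exp (-μ * τ j) * Real.exp (μ * τ j) = 1 := by
        rw [← Real.exp_add]; ring_nf; exact Real.exp_zero
      have h3 : ‖η₁ j - η₂ j‖ ≤ Y * Real.exp (μ * τ j) := by
        have h4 := mul_le_mul_of_nonneg_right hy (Real.exp_pos (μ * τ j)).le
        calc ‖η₁ j - η₂ j‖
            = (Real.exp (-μ * τ j) * Real.exp (μ * τ j)) * ‖η₁ j - η₂ j‖ := by
              rw [h2', one_mul]
          _ = (Real.exp (-μ * τ j) * ‖η₁ j - η₂ j‖) * Real.exp (μ * τ j) := by ring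
          _ ≤ Y * Real.exp (μ * τ j) := h4
      calc CG * ‖η₁ j - η₂ j‖ ≤ CG * (Y * Real.exp (μ * τ j)) := mul_le_mul_of_nonneg_left h3 hc
        _ = CG * Y * Real.exp (μ * τ j) := (mul_assoc _ _ _).symm
    · have hz : ‖η₁ j - η₂ j‖ = 0 :=
        le_antisymm (by nlinarith [hCG' (η₁ j) (η₂ j)]) (norm_nonneg _)
      rw [hz, mul_zero]
      exact mul_nonneg hCGY (Real.exp_nonneg _)
  clear_value hs X Y r M
  -- integrability
  have hIntAll : ∀ ξ : ℝ → EuclideanSpace ℝ (Fin n),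
      (∀ t ∈ Icc (0:ℝ) T, ‖ξ t‖ ≤ M) →
      (∀ j, 1 ≤ j → j ≤ N + 1 → ContinuousOn ξ (Ioo (τ (j - 1)) (τ j))) →
      ∀ i, 1 ≤ i → i ≤ N →
        IntervalIntegrable (fun t => f (τ i) t (ξ t) (u t)) volume 0 (τ i) := by
    intro ξ hMb hct i hi1 hi2
    rw [intervalIntegrable_iff_integrableOn_Ioc_of_le (hτpos i (by omega))]
    have key : IntegrableOn (fun t => f (τ i) t (ξ t) (u t)) (Set.Ioc (τ 0) (τ i)) := by
      apply chainInt
      intro j hj1 hj2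
      have hjN : j ≤ N + 1 := by omega
      rw [integrableOn_Ioc_iff_integrableOn_Ioo]
      have hsub : Ioo (τ (j - 1)) (τ j) ⊆ Icc 0 (τ i) := by
        intro t ht
        exact ⟨(hτpos (j - 1) (by omega)).trans ht.1.le,
          ht.2.le.trans (hτle j i hj2 (by omega))⟩
      have hgc : ContinuousOn (fun t => f (τ i) t (ξ t) (a j)) (Ioo (τ (j - 1)) (τ j)) := by
        apply hf.comp
          ((continuousOn_const.prodMk continuousOn_id).prodMk ((hct j hj1 hjN).prodMk continuousOn_const))
        intro t ht
        have h1 := hsub ht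
        refine ⟨⟨h1.1, h1.2, hτleT i (by omega)⟩, trivial, haU j hj1 hjN⟩
      -- a uniform bound via compactness
      have hcomp : IsCompact ((({τ i} : Set ℝ) ×ˢ Icc (0:ℝ) (τ i)) ×ˢ
          (Metric.closedBall (0 : EuclideanSpace ℝ (Fin n)) M ×ˢ ({a j} : Set (Fin m → ℝ)))) :=
        (isCompact_singleton.prod isCompact_Icc).prod
          ((isCompact_closedBall _ _).prod isCompact_singleton)
      have hsubD : ((({τ i} : Set ℝ) ×ˢ Icc (0:ℝ) (τ i)) ×ˢ
          (Metric.closedBall (0 : EuclideanSpace ℝ (Fin n)) M ×ˢ ({a j} : Set (Fin m → ℝ)))) ⊆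
          (({st : ℝ × ℝ | 0 ≤ st.2 ∧ st.2 ≤ st.1 ∧ st.1 ≤ T}) ×ˢ
            ((univ : Set (EuclideanSpace ℝ (Fin n))) ×ˢ U)) := by
        rintro ⟨⟨s, t⟩, x, α⟩ ⟨⟨hst, ht⟩, _, hα⟩
        simp only [Set.mem_singleton_iff] at hst hα
        subst hst hα
        exact ⟨⟨ht.1, ht.2, hτleT i (by omega)⟩, trivial, haU j hj1 hjN⟩
      obtain ⟨C, hC⟩ := hcomp.exists_bound_of_continuousOn (hf.mono hsubD)
      have hbd : ∀ t ∈ Ioo (τ (j - 1)) (τ j), ‖f (τ i) t (ξ t) (a j)‖ ≤ C := by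
        intro t ht
        have h1 := hsub ht
        exact hC ((τ i, t), (ξ t, a j))
          ⟨⟨rfl, h1⟩, by
            simp only [Metric.mem_closedBall, dist_zero_right]
            exact hMb t ⟨h1.1, h1.2.trans (hτleT i (by omega))⟩, rfl⟩
      have hgint : IntegrableOn (fun t => f (τ i) t (ξ t) (a j))
          (Ioo (τ (j - 1)) (τ j)) volume :=
        Integrable.mono' (integrableOn_const (C := C) measure_Ioo_lt_top.ne)
          (hgc.aestronglyMeasurable measurableSet_Ioo)
          ((ae_restrict_iff' measurableSet_Ioo).2 (ae_of_all _ hbd))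
      exact hgint.congr_fun
        (fun t ht => by rw [hu j hj1 hjN t ⟨ht.1.le, ht.2⟩]) measurableSet_Ioo
    simpa [hτ0] using key
  -- pointwise bound for the integrand difference
  have hfb : ∀ i, 1 ≤ i → i ≤ N → ∀ t ∈ Icc (0:ℝ) (τ i),
      ‖f (τ i) t (ξ₁ t) (u t) - f (τ i) t (ξ₂ t) (u t)‖ ≤ Cf * X * Real.exp (μ * t) := by
    intro i h1 h2 t ht
    have htT : t < T := lt_of_le_of_lt ht.2 (lt_of_le_of_lt (hτle i N h2 (by omega)) hτNT)
    have h3 := hfLip (τ i) t ht.1 ht.2 (hτleT i (by omega)) (u t) (huU t ht.1 htT)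
      (ξ₁ t) (ξ₂ t)
    exact h3.trans (hCfle t ⟨ht.1, htT.le⟩)
  -- value of the majorant integral
  have hmaj : ∀ b : ℝ, (∫ t in (0:ℝ)..b, Cf * X * Real.exp (μ * t)) =
      Cf * X * ((Real.exp (μ * b) - 1) / μ) := by
    intro b
    rw [intervalIntegral.integral_const_mul]
    congr 1
    have h1 : (∫ t in (0:ℝ)..b, Real.exp (μ * t)) =
        μ⁻¹ • ∫ x in (μ * 0)..(μ * b), Real.exp x :=
      intervalIntegral.integral_comp_mul_left Real.exp hμ.ne'
    rw [h1, integral_exp, mul_zero, Real.exp_zero, smul_eq_mul]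
    field_simp
  -- geometric sum identity
  have hrpow : Real.exp (-μ * ((N : ℝ) - 1) * hs) = r ^ (N - 1) := by
    rw [r_def, ← Real.exp_nat_mul]
    congr 1
    rw [Nat.cast_sub hN]
    push_cast
    ring
  have hgeo : ∑ k ∈ Finset.Icc 1 (N - 1), r ^ k = r * ((1 - r ^ (N - 1)) / (1 - r)) := by
    have hrne : r ≠ 1 := ne_of_lt hr1
    have h1 : Finset.range N = insert 0 (Finset.Icc 1 (N - 1)) := by
      ext k
      simp only [Finset.mem_range, Finset.mem_insert, Finset.mem_Icc]
      omega
    have h3 := geom_sum_eq hrne N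
    have h2 : ∑ k ∈ Finset.range N, r ^ k = 1 + ∑ k ∈ Finset.Icc 1 (N - 1), r ^ k := by
      rw [h1, Finset.sum_insert (by simp), pow_zero]
    have h6 : ∑ k ∈ Finset.Icc 1 (N - 1), r ^ k = (r ^ N - 1) / (r - 1) - 1 := by
      rw [← h3, h2]; ring
    have h4 : r ^ N = r * r ^ (N - 1) := by
      rw [← pow_succ']
      congr 1
      omega
    have h5 : (1 : ℝ) - r ≠ 0 := by nlinarith
    have h5' : r - 1 ≠ 0 := by nlinarith
    rw [h6, h4]
    field_simp
    ring
  -- main estimate, term by term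
  rw [hrpow]
  refine Finset.sup'_le _ _ ?_
  intro i hi
  rw [Finset.mem_Icc] at hi
  obtain ⟨hi1, hi2⟩ := hi
  set I₁ := ∫ t in (0:ℝ)..(τ i), f (τ i) t (ξ₁ t) (u t) with I₁_def
  set I₂ := ∫ t in (0:ℝ)..(τ i), f (τ i) t (ξ₂ t) (u t) with I₂_def
  set S₁ := ∑ j ∈ Finset.Icc 1 (i - 1), G (τ i) (τ j) (η₁ j) (a j) (a (j + 1)) with S₁_def
  set S₂ := ∑ j ∈ Finset.Icc 1 (i - 1), G (τ i) (τ j) (η₂ j) (a j) (a (j + 1)) with S₂_def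
  clear_value I₁ I₂ S₁ S₂
  have hvec : (h (τ i) + I₁ + S₁) - (h (τ i) + I₂ + S₂) = (I₁ - I₂) + (S₁ - S₂) := by abel
  rw [hvec]
  have hiN1 : i ≤ N + 1 := by omega
  have expos := Real.exp_nonneg (-μ * τ i)
  -- part A : the integral term
  have hInt₁ := hIntAll ξ₁ (fun t ht => (hM t ht).1) hcont₁ i hi1 hi2
  have hInt₂ := hIntAll ξ₂ (fun t ht => (hM t ht).2) hcont₂ i hi1 hi2
  have hτipos := hτpos i hiN1
  have hd : ‖I₁ - I₂‖ ≤ Cf * X * ((Real.exp (μ * τ i) - 1) / μ) := by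
    rw [I₁_def, I₂_def, ← intervalIntegral.integral_sub hInt₁ hInt₂]
    calc ‖∫ t in (0:ℝ)..(τ i), (f (τ i) t (ξ₁ t) (u t) - f (τ i) t (ξ₂ t) (u t))‖
        ≤ ∫ t in (0:ℝ)..(τ i), ‖f (τ i) t (ξ₁ t) (u t) - f (τ i) t (ξ₂ t) (u t)‖ :=
          intervalIntegral.norm_integral_le_integral_norm hτipos
      _ ≤ ∫ t in (0:ℝ)..(τ i), Cf * X * Real.exp (μ * t) :=
          intervalIntegral.integral_mono_on hτipos ((hInt₁.sub hInt₂).norm)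
            ((continuous_const.mul (Real.continuous_exp.comp
              (continuous_const.mul continuous_id))).intervalIntegrable 0 (τ i))
            (hfb i hi1 hi2)
      _ = Cf * X * ((Real.exp (μ * τ i) - 1) / μ) := hmaj (τ i)
  have hexp1 : Real.exp (-μ * τ i) * Real.exp (μ * τ i) = 1 := by
    rw [← Real.exp_add]; ring_nf; exact Real.exp_zero
  have partA : Real.exp (-μ * τ i) * ‖I₁ - I₂‖ ≤
      Cf * ((1 - Real.exp (-μ * τ N)) / μ) * X := by
    calc Real.exp (-μ * τ i) * ‖I₁ - I₂‖
        ≤ Real.exp (-μ * τ i) * (Cf * X * ((Real.exp (μ * τ i) - 1) / μ)) :=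
          mul_le_mul_of_nonneg_left hd expos
      _ = Cf * X * ((Real.exp (-μ * τ i) * (Real.exp (μ * τ i) - 1)) / μ) := by ring
      _ = Cf * X * ((1 - Real.exp (-μ * τ i)) / μ) := by
          rw [mul_sub, hexp1, mul_one]
      _ ≤ Cf * X * ((1 - Real.exp (-μ * τ N)) / μ) := by
          have hmono : Real.exp (-μ * τ N) ≤ Real.exp (-μ * τ i) :=
            Real.exp_le_exp.2 (by nlinarith [hτle i N hi2 (by omega)])
          exact mul_le_mul_of_nonneg_left ((div_le_div_iff_of_pos_right hμ).mpr (by linarith)) hCfX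
      _ = Cf * ((1 - Real.exp (-μ * τ N)) / μ) * X := by ring
  -- part B : the sum term
  have partB : Real.exp (-μ * τ i) * ‖S₁ - S₂‖ ≤
      CG * (r * ((1 - r ^ (N - 1)) / (1 - r))) * Y := by
    have hsum : S₁ - S₂ = ∑ j ∈ Finset.Icc 1 (i - 1),
        (G (τ i) (τ j) (η₁ j) (a j) (a (j + 1)) - G (τ i) (τ j) (η₂ j) (a j) (a (j + 1))) := by
      rw [S₁_def, S₂_def, Finset.sum_sub_distrib]
    have perterm : ∀ j ∈ Finset.Icc 1 (i - 1), Real.exp (-μ * τ i) *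
        ‖G (τ i) (τ j) (η₁ j) (a j) (a (j + 1)) - G (τ i) (τ j) (η₂ j) (a j) (a (j + 1))‖ ≤
        CG * Y * r ^ (i - j) := by
      intro j hj
      rw [Finset.mem_Icc] at hj
      have hji : j < i := by omega
      have h1 : ‖G (τ i) (τ j) (η₁ j) (a j) (a (j + 1)) -
          G (τ i) (τ j) (η₂ j) (a j) (a (j + 1))‖ ≤ CG * ‖η₁ j - η₂ j‖ :=
        hGLip (τ i) (τ j) (hτpos j (by omega)) (hτle j i hji.le hiN1) (hτleT i hiN1)
          (a j) (haU j hj.1 (by omega)) (a (j + 1)) (haU (j + 1) (by omega) (by omega))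
          (η₁ j) (η₂ j)
      have h2 : CG * ‖η₁ j - η₂ j‖ ≤ CG * Y * Real.exp (μ * τ j) :=
        hCGle j hj.1 (by omega)
      calc Real.exp (-μ * τ i) * ‖G (τ i) (τ j) (η₁ j) (a j) (a (j + 1)) -
            G (τ i) (τ j) (η₂ j) (a j) (a (j + 1))‖
          ≤ Real.exp (-μ * τ i) * (CG * Y * Real.exp (μ * τ j)) :=
            mul_le_mul_of_nonneg_left (h1.trans h2) expos
        _ = CG * Y * (Real.exp (-μ * τ i) * Real.exp (μ * τ j)) := by ring
        _ = CG * Y * Real.exp (μ * τ j + -μ * τ i) := by rw [← Real.exp_add]; ring_nf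
        _ ≤ CG * Y * Real.exp (((i - j : ℕ) : ℝ) * (-μ * hs)) := by
            apply mul_le_mul_of_nonneg_left _ hCGY
            apply Real.exp_le_exp.2
            have hgap := gap j (i - j) (by omega)
            rw [show j + (i - j) = i by omega] at hgap
            nlinarith [mul_le_mul_of_nonneg_left hgap hμ.le]
        _ = CG * Y * r ^ (i - j) := by rw [Real.exp_nat_mul, r_def]
    have hreindex : ∑ j ∈ Finset.Icc 1 (i - 1), r ^ (i - j) =
        ∑ k ∈ Finset.Icc 1 (i - 1), r ^ k := by
      apply Finset.sum_nbij' (i := fun j => i - j) (j := fun k => i - k)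
      · intro j hj; rw [Finset.mem_Icc] at *; omega
      · intro k hk; rw [Finset.mem_Icc] at *; omega
      · intro j hj; rw [Finset.mem_Icc] at hj; omega
      · intro k hk; rw [Finset.mem_Icc] at hk; omega
      · intro j hj; rfl
    calc Real.exp (-μ * τ i) * ‖S₁ - S₂‖
        ≤ Real.exp (-μ * τ i) * ∑ j ∈ Finset.Icc 1 (i - 1),
            ‖G (τ i) (τ j) (η₁ j) (a j) (a (j + 1)) -
              G (τ i) (τ j) (η₂ j) (a j) (a (j + 1))‖ := by
          rw [hsum]
          exact mul_le_mul_of_nonneg_left (norm_sum_le _ _) expos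
      _ = ∑ j ∈ Finset.Icc 1 (i - 1), Real.exp (-μ * τ i) *
            ‖G (τ i) (τ j) (η₁ j) (a j) (a (j + 1)) -
              G (τ i) (τ j) (η₂ j) (a j) (a (j + 1))‖ := Finset.mul_sum _ _ _
      _ ≤ ∑ j ∈ Finset.Icc 1 (i - 1), CG * Y * r ^ (i - j) :=
          Finset.sum_le_sum perterm
      _ = CG * Y * ∑ j ∈ Finset.Icc 1 (i - 1), r ^ (i - j) := by rw [Finset.mul_sum]
      _ = CG * Y * ∑ k ∈ Finset.Icc 1 (i - 1), r ^ k := by rw [hreindex]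
      _ ≤ CG * Y * ∑ k ∈ Finset.Icc 1 (N - 1), r ^ k :=
          mul_le_mul_of_nonneg_left
            (Finset.sum_le_sum_of_subset_of_nonneg
              (Finset.Icc_subset_Icc_right (by omega))
              (fun k _ _ => pow_nonneg hr0.le k)) hCGY
      _ = CG * (r * ((1 - r ^ (N - 1)) / (1 - r))) * Y := by rw [hgeo]; ring
  calc Real.exp (-μ * τ i) * ‖(I₁ - I₂) + (S₁ - S₂)‖
      ≤ Real.exp (-μ * τ i) * (‖I₁ - I₂‖ + ‖S₁ - S₂‖) :=
        mul_le_mul_of_nonneg_left (norm_add_le _ _) expos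
    _ = Real.exp (-μ * τ i) * ‖I₁ - I₂‖ + Real.exp (-μ * τ i) * ‖S₁ - S₂‖ := mul_add _ _ _
    _ ≤ Cf * ((1 - Real.exp (-μ * τ N)) / μ) * X +
        CG * (r * ((1 - r ^ (N - 1)) / (1 - r))) * Y := add_le_add partA partB
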